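/- The seller's expected payoff equals the quantile formula: E[π(r)] = V_0 · r^{Λ_N} + V(r) · Σ_{i=1}^{N} r^{Λ_{N|i}} (1 − r^{λ_i}) + ∫_r^1 V(t) · [ (1 − N) Λ_N t^{Λ_N − 1} + Σ_{i=1}^{N} Λ_{N|i} t^{Λ_{N|i} − 1} ] dt. -/

import Mathlib

open MeasureTheory ProbabilityTheory

open MeasureTheory ProbabilityTheory

noncomputable def secondMax {N : ℕ} (v : Fin N → ℝ) : ℝ :=
  sSup {x | ∃ i j, i ≠ j ∧ x = min (v i) (v j)}

private lemma offDiag_nonempty' {N : ℕ} (hN : 2 ≤ N) :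
    (Finset.univ.offDiag : Finset (Fin N × Fin N)).Nonempty := by
  refine ⟨(⟨0, by omega⟩, ⟨1, by omega⟩), ?_⟩
  simp only [Finset.mem_offDiag, Finset.mem_univ, true_and, ne_eq]
  intro h
  have := congrArg Fin.val h
  simp at this

private lemma secondMax_eq_sup' {N : ℕ} (hN : 2 ≤ N) (v : Fin N → ℝ) :
    secondMax v
      = Finset.univ.offDiag.sup' (offDiag_nonempty' hN) (fun p => min (v p.1) (v p.2)) := by
  rw [Finset.sup'_eq_csSup_image]
  unfold secondMax
  congr 1
  ext x
  constructor
  · rintro ⟨i, j, hij, rfl⟩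
    exact ⟨(i, j), by simp [Finset.mem_offDiag, hij], rfl⟩
  · rintro ⟨p, hp, rfl⟩
    have hne : p.1 ≠ p.2 := by simpa [Finset.mem_offDiag] using hp
    exact ⟨p.1, p.2, hne, rfl⟩

private lemma sup'_offDiag_lt_iff {N : ℕ} (hN : 2 ≤ N) (v : Fin N → ℝ) (t : ℝ) :
    Finset.univ.offDiag.sup' (offDiag_nonempty' hN) (fun p => min (v p.1) (v p.2)) < t
      ↔ ∃ i, ∀ j, j ≠ i → v j < t := by
  rw [Finset.sup'_lt_iff]
  constructor
  · intro h
    by_contra hc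
    push_neg at hc
    obtain ⟨j, hj, hjt⟩ := hc ⟨0, by omega⟩
    obtain ⟨k, hk, hkt⟩ := hc j
    have hm := h (k, j) (Finset.mem_offDiag.mpr ⟨Finset.mem_univ _, Finset.mem_univ _, hk⟩)
    simp only [min_lt_iff] at hm
    rcases hm with h1 | h1 <;> linarith
  · rintro ⟨i, hi⟩ p hp
    have hne : p.1 ≠ p.2 := (Finset.mem_offDiag.mp hp).2.2
    by_cases h1 : p.1 = i
    · have h2 : p.2 ≠ i := fun h => hne (h1.trans h.symm)
      exact lt_of_le_of_lt (min_le_right _ _) (hi p.2 h2)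
    · exact lt_of_le_of_lt (min_le_left _ _) (hi p.1 h1)

private lemma sup'_offDiag_le_iff {N : ℕ} (hN : 2 ≤ N) (v : Fin N → ℝ) (t : ℝ) :
    Finset.univ.offDiag.sup' (offDiag_nonempty' hN) (fun p => min (v p.1) (v p.2)) ≤ t
      ↔ ∃ i, ∀ j, j ≠ i → v j ≤ t := by
  rw [Finset.sup'_le_iff]
  constructor
  · intro h
    by_contra hc
    push_neg at hc
    obtain ⟨j, hj, hjt⟩ := hc ⟨0, by omega⟩
    obtain ⟨k, hk, hkt⟩ := hc j
    have hm := h (k, j) (Finset.mem_offDiag.mpr ⟨Finset.mem_univ _, Finset.mem_univ _, hk⟩)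
    simp only [min_le_iff] at hm
    rcases hm with h1 | h1 <;> linarith
  · rintro ⟨i, hi⟩ p hp
    have hne : p.1 ≠ p.2 := (Finset.mem_offDiag.mp hp).2.2
    by_cases h1 : p.1 = i
    · have h2 : p.2 ≠ i := fun h => hne (h1.trans h.symm)
      exact le_trans (min_le_right _ _) (hi p.2 h2)
    · exact le_trans (min_le_left _ _) (hi p.1 h1)


private lemma map_rpow_apply {Ω : Type*} [MeasurableSpace Ω] (μ : Measure Ω) (X : Ω → ℝ)
    (hX : Measurable X) (hmap : Measure.map X μ = volume.restrict (Set.Icc 0 1))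
    (lam : ℝ) {B : Set ℝ} (hB : MeasurableSet B) :
    μ {ω | X ω ^ (1 / lam) ∈ B} = volume ({u : ℝ | u ^ (1 / lam) ∈ B} ∩ Set.Icc 0 1) := by
  have hf : Measurable fun u : ℝ => u ^ (1 / lam) := by fun_prop
  have hmeas : MeasurableSet {u : ℝ | u ^ (1 / lam) ∈ B} := hf hB
  calc μ {ω | X ω ^ (1 / lam) ∈ B}
      = Measure.map X μ {u | u ^ (1 / lam) ∈ B} := by
        rw [Measure.map_apply hX hmeas]; rfl
    _ = _ := by rw [hmap, Measure.restrict_apply hmeas]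

/-- For `t ∈ [0,1]`, `P(X^{1/λ} < t) = t^λ` when `X` is uniform on `[0,1]`. -/
private lemma meas_rpow_lt {Ω : Type*} [MeasurableSpace Ω] (μ : Measure Ω) (X : Ω → ℝ)
    (hX : Measurable X) (hmap : Measure.map X μ = volume.restrict (Set.Icc 0 1))
    {lam : ℝ} (hlam : 0 < lam) {t : ℝ} (ht : t ∈ Set.Icc (0:ℝ) 1) :
    μ {ω | X ω ^ (1 / lam) < t} = ENNReal.ofReal (t ^ lam) := by
  have h := map_rpow_apply μ X hX hmap lam (measurableSet_Iio (a := t))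
  have hset : {u : ℝ | u ^ (1 / lam) ∈ Set.Iio t} ∩ Set.Icc 0 1 = Set.Ico 0 (t ^ lam) := by
    ext u
    simp only [Set.mem_inter_iff, Set.mem_setOf_eq, Set.mem_Iio, Set.mem_Icc, Set.mem_Ico]
    constructor
    · rintro ⟨h1, h2, h3⟩
      refine ⟨h2, ?_⟩
      have := Real.rpow_lt_rpow (Real.rpow_nonneg h2 _) h1 hlam
      rwa [one_div, Real.rpow_inv_rpow h2 hlam.ne'] at this
    · rintro ⟨h1, h2⟩
      have htl1 : t ^ lam ≤ 1 := Real.rpow_le_one ht.1 ht.2 hlam.le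
      refine ⟨?_, h1, le_trans (le_of_lt h2) htl1⟩
      have := Real.rpow_lt_rpow h1 h2 (by positivity : (0:ℝ) < 1 / lam)
      rwa [one_div, Real.rpow_rpow_inv ht.1 hlam.ne', ← one_div] at this
  have : μ {ω | X ω ^ (1 / lam) < t} = volume (Set.Ico 0 (t ^ lam)) := by
    rw [← hset, ← h]; rfl
  rw [this, Real.volume_Ico, sub_zero]

/-- For every real `t`, `P(X^{1/λ} ≤ t) = (clamp t)^λ` when `X` is uniform on `[0,1]`. -/
private lemma meas_rpow_le_cl {Ω : Type*} [MeasurableSpace Ω] (μ : Measure Ω)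
    [IsProbabilityMeasure μ] (X : Ω → ℝ)
    (hX : Measurable X) (hmap : Measure.map X μ = volume.restrict (Set.Icc 0 1))
    {lam : ℝ} (hlam : 0 < lam) (t : ℝ) :
    μ {ω | X ω ^ (1 / lam) ≤ t} = ENNReal.ofReal ((max 0 (min 1 t)) ^ lam) := by
  have h := map_rpow_apply μ X hX hmap lam (measurableSet_Iic (a := t))
  rcases lt_or_ge t 0 with hneg | h0
  · have hset : {u : ℝ | u ^ (1 / lam) ∈ Set.Iic t} ∩ Set.Icc 0 1 = (∅ : Set ℝ) := by
      ext u
      simp only [Set.mem_inter_iff, Set.mem_setOf_eq, Set.mem_Iic, Set.mem_Icc,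
        Set.mem_empty_iff_false, iff_false, not_and]
      intro h1 h2
      exact fun _ => absurd (le_trans (Real.rpow_nonneg h2 _) h1) (not_le.mpr hneg)
    have hcl : max 0 (min 1 t) = 0 := max_eq_left (le_trans (min_le_right _ _) hneg.le)
    have : μ {ω | X ω ^ (1 / lam) ≤ t} = volume (∅ : Set ℝ) := by rw [← hset, ← h]; rfl
    rw [this, hcl, Real.zero_rpow hlam.ne']
    simp
  rcases le_or_gt t 1 with h1 | hbig
  · have hcl : max 0 (min 1 t) = t := by rw [min_eq_right h1, max_eq_right h0]
    have hset : {u : ℝ | u ^ (1 / lam) ∈ Set.Iic t} ∩ Set.Icc 0 1 = Set.Icc 0 (t ^ lam) := by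
      ext u
      simp only [Set.mem_inter_iff, Set.mem_setOf_eq, Set.mem_Iic, Set.mem_Icc]
      constructor
      · rintro ⟨hu1, hu2, hu3⟩
        refine ⟨hu2, ?_⟩
        have := Real.rpow_le_rpow (Real.rpow_nonneg hu2 _) hu1 hlam.le
        rwa [one_div, Real.rpow_inv_rpow hu2 hlam.ne'] at this
      · rintro ⟨hu1, hu2⟩
        have htl1 : t ^ lam ≤ 1 := Real.rpow_le_one h0 h1 hlam.le
        refine ⟨?_, hu1, hu2.trans htl1⟩
        have := Real.rpow_le_rpow hu1 hu2 (by positivity : (0:ℝ) ≤ 1 / lam)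
        rwa [one_div, Real.rpow_rpow_inv h0 hlam.ne', ← one_div] at this
    have : μ {ω | X ω ^ (1 / lam) ≤ t} = volume (Set.Icc 0 (t ^ lam)) := by rw [← hset, ← h]; rfl
    rw [this, hcl, Real.volume_Icc, sub_zero]
  · have hcl : max 0 (min 1 t) = 1 := by rw [min_eq_left hbig.le]; norm_num
    have hset : {u : ℝ | u ^ (1 / lam) ∈ Set.Iic t} ∩ Set.Icc 0 1 = Set.Icc 0 1 := by
      apply Set.inter_eq_right.mpr
      intro u hu
      simp only [Set.mem_setOf_eq, Set.mem_Iic]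
      exact le_trans (Real.rpow_le_one hu.1 hu.2 (by positivity)) hbig.le
    have : μ {ω | X ω ^ (1 / lam) ≤ t} = volume (Set.Icc (0:ℝ) 1) := by rw [← hset, ← h]; rfl
    rw [this, hcl, Real.one_rpow, Real.volume_Icc]
    norm_num

set_option maxHeartbeats 1000000 in
theorem expected_seller_payoff_quantile_formula
    {Ω : Type*} [MeasurableSpace Ω] (μ : Measure Ω) [IsProbabilityMeasure μ]
    (N : ℕ) (hN : 2 ≤ N) (l : Fin N → ℝ) (hl : ∀ i, 0 < l i)
    (Λ : ℝ) (hΛ : Λ = ∑ j, l j)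
    (Vq : ℝ → ℝ) (hVcont : ContinuousOn Vq (Set.Icc 0 1))
    (hVmono : StrictMonoOn Vq (Set.Icc 0 1))
    (U : Fin N → Ω → ℝ) (hU : ∀ i, Measurable (U i))
    (hindep : iIndepFun U μ)
    (hunif : ∀ i, Measure.map (U i) μ = volume.restrict (Set.Icc (0:ℝ) 1))
    (r : ℝ) (hr : r ∈ Set.Ioo (0:ℝ) 1) (V0 R : ℝ) (hR : R = Vq r) :
    (∫ ω, (if sSup (Set.range fun i => Vq ((U i ω) ^ (1 / l i))) < R then V0
          else if secondMax (fun i => Vq ((U i ω) ^ (1 / l i))) < R then R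
          else secondMax (fun i => Vq ((U i ω) ^ (1 / l i)))) ∂μ)
      = V0 * r ^ Λ + Vq r * ∑ i, r ^ (Λ - l i) * (1 - r ^ (l i))
        + ∫ t in r..1, Vq t * ((1 - (N:ℝ)) * Λ * t ^ (Λ - 1)
            + ∑ i, (Λ - l i) * t ^ (Λ - l i - 1)) := by
  classical
  obtain ⟨hr0, hr1⟩ := hr
  have hNpos : 0 < N := by omega
  have hΛpos : 0 < Λ := by
    rw [hΛ]; exact Finset.sum_pos (fun i _ => hl i) ⟨⟨0, hNpos⟩, Finset.mem_univ _⟩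
  have hsum_erase : ∀ i : Fin N, ∑ j ∈ Finset.univ.erase i, l j = Λ - l i := by
    intro i
    have := Finset.add_sum_erase Finset.univ l (Finset.mem_univ i)
    rw [hΛ]; linarith
  have hΛl : ∀ i : Fin N, 0 < Λ - l i := by
    intro i
    rw [← hsum_erase i]
    refine Finset.sum_pos (fun j _ => hl j) ?_
    rw [← Finset.card_pos, Finset.card_erase_of_mem (Finset.mem_univ i)]
    simp only [Finset.card_univ, Fintype.card_fin]
    omega
  -- the clamp function and the globally continuous monotone version of Vq
  set cl : ℝ → ℝ := fun t => max 0 (min 1 t) with hcl_def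
  have hcl_mem : ∀ t, cl t ∈ Set.Icc (0:ℝ) 1 :=
    fun t => ⟨le_max_left _ _, max_le zero_le_one (min_le_left _ _)⟩
  have hcl_eq : ∀ t ∈ Set.Icc (0:ℝ) 1, cl t = t := by
    intro t ht
    simp only [hcl_def]
    rw [min_eq_right ht.2, max_eq_right ht.1]
  have hcl_mono : Monotone cl :=
    fun a b hab => max_le_max le_rfl (min_le_min le_rfl hab)
  have hcl_cont : Continuous cl := continuous_const.max (continuous_const.min continuous_id)
  set Vt : ℝ → ℝ := fun t => Vq (cl t) with hVt_def
  have hVt_cont : Continuous Vt := hVcont.comp_continuous hcl_cont hcl_mem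
  have hVt_mono : Monotone Vt := fun a b hab =>
    hVmono.monotoneOn (hcl_mem a) (hcl_mem b) (hcl_mono hab)
  have hVt_eq : ∀ t ∈ Set.Icc (0:ℝ) 1, Vt t = Vq t := fun t ht => by
    simp only [hVt_def]; rw [hcl_eq t ht]
  -- the transformed values
  set W : Fin N → Ω → ℝ := fun i ω => (U i ω) ^ (1 / l i) with hW_def
  have hWm : ∀ i, Measurable (W i) := fun i =>
    (show Measurable fun x : ℝ => x ^ (1 / l i) by fun_prop).comp (hU i)
  have hWindep : iIndepFun W μ :=
    hindep.comp (fun i u => u ^ (1 / l i)) (fun i => by fun_prop)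
  have hWae : ∀ᵐ ω ∂μ, ∀ i, W i ω ∈ Set.Icc (0:ℝ) 1 := by
    rw [ae_all_iff]
    intro i
    have hU01 : ∀ᵐ ω ∂μ, U i ω ∈ Set.Icc (0:ℝ) 1 := by
      rw [ae_iff]
      have heq : {ω | ¬ U i ω ∈ Set.Icc (0:ℝ) 1} = U i ⁻¹' (Set.Icc (0:ℝ) 1)ᶜ := rfl
      rw [heq, ← Measure.map_apply (hU i) measurableSet_Icc.compl, hunif i,
        Measure.restrict_apply measurableSet_Icc.compl]
      simp
    filter_upwards [hU01] with ω hω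
    exact ⟨Real.rpow_nonneg hω.1 _, Real.rpow_le_one hω.1 hω.2 (one_div_pos.mpr (hl i)).le⟩
  -- max and second max
  have hne : (Finset.univ : Finset (Fin N)).Nonempty := ⟨⟨0, hNpos⟩, Finset.mem_univ _⟩
  set M : Ω → ℝ := fun ω => Finset.univ.sup' hne (fun i => W i ω) with hM_def
  set S : Ω → ℝ := fun ω =>
    Finset.univ.offDiag.sup' (offDiag_nonempty' hN)
      (fun p => min (W p.1 ω) (W p.2 ω)) with hS_def
  have hMm : Measurable M := by
    have h1 := Finset.measurable_sup' hne (f := W) (fun i _ => hWm i)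
    have : M = Finset.univ.sup' hne W := by
      funext ω; rw [Finset.sup'_apply]
    rwa [this]
  have hSm : Measurable S := by
    have h1 := Finset.measurable_sup' (offDiag_nonempty' hN)
      (f := fun p : Fin N × Fin N => fun ω => min (W p.1 ω) (W p.2 ω))
      (fun p _ => (hWm p.1).min (hWm p.2))
    have : S = Finset.univ.offDiag.sup' (offDiag_nonempty' hN)
        (fun p : Fin N × Fin N => fun ω => min (W p.1 ω) (W p.2 ω)) := by
      funext ω; rw [Finset.sup'_apply]
    rwa [this]
  have hSM : ∀ ω, S ω ≤ M ω := by
    intro ω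
    refine Finset.sup'_le _ _ (fun p hp => ?_)
    exact le_trans (min_le_left _ _) (Finset.le_sup' (fun i => W i ω) (Finset.mem_univ p.1))
  -- density and CDF of the second max
  set g : ℝ → ℝ := fun t =>
    (∑ i, (Λ - l i) * t ^ (Λ - l i - 1)) - ((N:ℝ) - 1) * Λ * t ^ (Λ - 1) with hg_def
  set G : ℝ → ℝ := fun s => (∑ i, s ^ (Λ - l i)) - ((N:ℝ) - 1) * s ^ Λ with hG_def
  set h : ℝ → ℝ := fun t => if t < r then 0 else Vt t with hh_def
  have hhm : Measurable h := Measurable.ite measurableSet_Iio measurable_const hVt_cont.measurable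
  -- events
  set A : Set Ω := ⋂ i ∈ Finset.univ, W i ⁻¹' Set.Iio r with hA_def
  set B : Fin N → Set Ω := fun i =>
    ⋂ j ∈ Finset.univ, W j ⁻¹' (if j = i then Set.Ici r else Set.Iio r) with hB_def
  have hAmeas : MeasurableSet A :=
    MeasurableSet.biInter (Set.to_countable _) (fun i _ => (hWm i) measurableSet_Iio)
  have hBmeas : ∀ i, MeasurableSet (B i) := by
    intro i
    refine MeasurableSet.biInter (Set.to_countable _) (fun j _ => (hWm j) ?_)
    split
    · exact measurableSet_Ici
    · exact measurableSet_Iio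
  have hmemA : ∀ ω, ω ∈ A ↔ ∀ i, W i ω < r := by
    intro ω; simp [hA_def]
  have hmemB : ∀ ω i, ω ∈ B i ↔ (r ≤ W i ω ∧ ∀ j, j ≠ i → W j ω < r) := by
    intro ω i
    simp only [hB_def, Set.mem_iInter, Set.mem_preimage]
    constructor
    · intro hj
      have h1 := hj i (Finset.mem_univ i)
      rw [if_pos rfl] at h1
      refine ⟨h1, fun j hji => ?_⟩
      have h2 := hj j (Finset.mem_univ j)
      rwa [if_neg hji] at h2
    · rintro ⟨h1, h2⟩ j _
      by_cases hji : j = i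
      · subst hji; rwa [if_pos rfl]
      · rw [if_neg hji]; exact h2 j hji
  -- pointwise identity for the integrand
  have hptwise : ∀ᵐ ω ∂μ,
      (if sSup (Set.range fun i => Vq ((U i ω) ^ (1 / l i))) < R then V0
       else if secondMax (fun i => Vq ((U i ω) ^ (1 / l i))) < R then R
       else secondMax (fun i => Vq ((U i ω) ^ (1 / l i))))
      = A.indicator (fun _ => V0) ω + (⋃ i, B i).indicator (fun _ => Vq r) ω + h (S ω) := by
    have hrmem : r ∈ Set.Icc (0:ℝ) 1 := ⟨hr0.le, hr1.le⟩
    filter_upwards [hWae] with ω hω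
    have hMmem : M ω ∈ Set.Icc (0:ℝ) 1 := by
      obtain ⟨i0, -, hi0⟩ := Finset.exists_mem_eq_sup' hne (fun i => W i ω)
      have : M ω = W i0 ω := hi0
      rw [this]; exact hω i0
    have hSmem : S ω ∈ Set.Icc (0:ℝ) 1 := by
      obtain ⟨p, -, hp⟩ := Finset.exists_mem_eq_sup' (offDiag_nonempty' hN)
        (fun p => min (W p.1 ω) (W p.2 ω))
      have : S ω = min (W p.1 ω) (W p.2 ω) := hp
      rw [this]
      exact ⟨le_min (hω p.1).1 (hω p.2).1, le_trans (min_le_left _ _) (hω p.1).2⟩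
    have hsup : sSup (Set.range fun i => Vq ((U i ω) ^ (1 / l i))) = Vt (M ω) := by
      have hfun : (fun i => Vq ((U i ω) ^ (1 / l i))) = fun i => Vt (W i ω) := by
        funext i
        exact (hVt_eq _ (hω i)).symm
      rw [hfun, ← Set.image_univ, ← Finset.coe_univ (α := Fin N),
        ← Finset.sup'_eq_csSup_image _ hne]
      exact (Finset.comp_sup'_eq_sup'_comp hne Vt (fun x y => hVt_mono.map_max)).symm
    have hsec : secondMax (fun i => Vq ((U i ω) ^ (1 / l i))) = Vt (S ω) := by
      have h1 : secondMax (fun i => Vq ((U i ω) ^ (1 / l i)))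
          = Finset.univ.offDiag.sup' (offDiag_nonempty' hN)
              (fun p => min (Vq (W p.1 ω)) (Vq (W p.2 ω))) := secondMax_eq_sup' hN _
      have h2 : ∀ p ∈ Finset.univ.offDiag,
          min (Vq (W p.1 ω)) (Vq (W p.2 ω)) = Vt (min (W p.1 ω) (W p.2 ω)) := by
        intro p _
        rw [← hVt_eq _ (hω p.1), ← hVt_eq _ (hω p.2), hVt_mono.map_min]
      rw [h1, Finset.sup'_congr (offDiag_nonempty' hN) rfl h2]
      exact (Finset.comp_sup'_eq_sup'_comp (offDiag_nonempty' hN) Vt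
        (fun x y => hVt_mono.map_max)).symm
    have hMR : (Vt (M ω) < R) ↔ (M ω < r) := by
      rw [hR, ← hVt_eq r hrmem, hVt_eq _ hMmem, hVt_eq _ hrmem]
      exact hVmono.lt_iff_lt hMmem hrmem
    have hSR : (Vt (S ω) < R) ↔ (S ω < r) := by
      rw [hR, ← hVt_eq r hrmem, hVt_eq _ hSmem, hVt_eq _ hrmem]
      exact hVmono.lt_iff_lt hSmem hrmem
    rw [hsup, hsec]
    by_cases h1 : M ω < r
    · rw [if_pos (hMR.mpr h1)]
      have hS1 : S ω < r := lt_of_le_of_lt (hSM ω) h1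
      have hA1 : ω ∈ A := (hmemA ω).mpr (fun i =>
        lt_of_le_of_lt (Finset.le_sup' (fun i => W i ω) (Finset.mem_univ i)) h1)
      have hB1 : ω ∉ ⋃ i, B i := by
        rw [Set.mem_iUnion]
        rintro ⟨i, hi⟩
        exact absurd ((hmemB ω i).mp hi).1 (not_le.mpr (((hmemA ω).mp hA1) i))
      rw [Set.indicator_of_mem hA1, Set.indicator_of_notMem hB1]
      simp only [hh_def]
      rw [if_pos hS1]
      ring
    · by_cases h2 : S ω < r
      · rw [if_neg (by rw [hMR]; exact h1), if_pos (hSR.mpr h2)]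
        have hA2 : ω ∉ A := by
          intro hmem
          exact h1 ((Finset.sup'_lt_iff hne).mpr (fun i _ => ((hmemA ω).mp hmem) i))
        have hB2 : ω ∈ ⋃ i, B i := by
          obtain ⟨i, hi⟩ := (sup'_offDiag_lt_iff hN (fun i => W i ω) r).mp h2
          have hri : r ≤ W i ω := by
            by_contra hc
            push_neg at hc
            refine h1 ((Finset.sup'_lt_iff hne).mpr (fun j _ => ?_))
            by_cases hji : j = i
            · subst hji; exact hc
            · exact hi j hji
          exact Set.mem_iUnion.mpr ⟨i, (hmemB ω i).mpr ⟨hri, hi⟩⟩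
        rw [Set.indicator_of_notMem hA2, Set.indicator_of_mem hB2]
        simp only [hh_def]
        rw [if_pos h2, hR]
        ring
      · push_neg at h2
        rw [if_neg (by rw [hMR]; exact h1), if_neg (by rw [hSR]; exact not_lt.mpr h2)]
        have hA3 : ω ∉ A := by
          intro hmem
          exact h1 ((Finset.sup'_lt_iff hne).mpr (fun i _ => ((hmemA ω).mp hmem) i))
        have hB3 : ω ∉ ⋃ i, B i := by
          rw [Set.mem_iUnion]
          rintro ⟨i, hi⟩
          have hlt := (sup'_offDiag_lt_iff hN (fun i => W i ω) r).mpr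
            ⟨i, ((hmemB ω i).mp hi).2⟩
          exact absurd hlt (not_lt.mpr h2)
        rw [Set.indicator_of_notMem hA3, Set.indicator_of_notMem hB3]
        simp only [hh_def]
        rw [if_neg (not_lt.mpr h2)]
        ring
  -- probabilities of the events
  have hμA : μ A = ENNReal.ofReal (r ^ Λ) := by
    have hprod := hWindep.measure_inter_preimage_eq_mul Finset.univ
      (sets := fun _ => Set.Iio r) (fun i _ => measurableSet_Iio)
    have hone : ∀ i : Fin N, μ (W i ⁻¹' Set.Iio r) = ENNReal.ofReal (r ^ l i) := fun i =>
      meas_rpow_lt μ (U i) (hU i) (hunif i) (hl i) ⟨hr0.le, hr1.le⟩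
    rw [hA_def, hprod, Finset.prod_congr rfl (fun i _ => hone i),
      ← ENNReal.ofReal_prod_of_nonneg (fun i _ => Real.rpow_nonneg hr0.le _),
      hΛ, Real.rpow_sum_of_pos hr0]
  have hBval : ∀ i, μ (B i) = ENNReal.ofReal (r ^ (Λ - l i) * (1 - r ^ (l i))) := by
    intro i
    have hsets : ∀ j : Fin N, MeasurableSet (if j = i then Set.Ici r else Set.Iio r) := by
      intro j; split
      · exact measurableSet_Ici
      · exact measurableSet_Iio
    have hprod := hWindep.measure_inter_preimage_eq_mul Finset.univ
      (sets := fun j => if j = i then Set.Ici r else Set.Iio r) (fun j _ => hsets j)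
    have hBi : B i = ⋂ j ∈ Finset.univ, W j ⁻¹' (if j = i then Set.Ici r else Set.Iio r) := by
      rw [hB_def]
    have hlt : ∀ j : Fin N, μ (W j ⁻¹' Set.Iio r) = ENNReal.ofReal (r ^ l j) := fun j =>
      meas_rpow_lt μ (U j) (hU j) (hunif j) (hl j) ⟨hr0.le, hr1.le⟩
    have hgei : μ (W i ⁻¹' Set.Ici r) = ENNReal.ofReal (1 - r ^ l i) := by
      have hc : W i ⁻¹' Set.Ici r = (W i ⁻¹' Set.Iio r)ᶜ := by
        rw [← Set.preimage_compl, Set.compl_Iio]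
      rw [hc, measure_compl ((hWm i) measurableSet_Iio) (measure_ne_top μ _), hlt i,
        measure_univ, ← ENNReal.ofReal_one,
        ← ENNReal.ofReal_sub _ (Real.rpow_nonneg hr0.le _)]
    rw [hBi, hprod, ← Finset.prod_erase_mul _ _ (Finset.mem_univ i)]
    have herase : ∀ j ∈ Finset.univ.erase i,
        μ (W j ⁻¹' (if j = i then Set.Ici r else Set.Iio r)) = ENNReal.ofReal (r ^ l j) := by
      intro j hj
      rw [if_neg (Finset.ne_of_mem_erase hj), hlt j]
    have hii : μ (W i ⁻¹' (fun j => if j = i then Set.Ici r else Set.Iio r) i)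
        = ENNReal.ofReal (1 - r ^ l i) := by
      simpa using hgei
    rw [Finset.prod_congr rfl herase, hii,
      ← ENNReal.ofReal_prod_of_nonneg (fun j _ => Real.rpow_nonneg hr0.le _),
      ← ENNReal.ofReal_mul (Finset.prod_nonneg (fun j _ => Real.rpow_nonneg hr0.le _))]
    congr 1
    rw [← Real.rpow_sum_of_pos hr0, hsum_erase i]
  have hBdisj : Pairwise (Function.onFun Disjoint B) := by
    intro i j hij
    rw [Function.onFun, Set.disjoint_left]
    intro ω hωi hωj
    have h1 := ((hmemB ω i).mp hωi).1
    have h2 := ((hmemB ω j).mp hωj).2 i hij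
    exact absurd h1 (not_le.mpr h2)
  have hμB : μ (⋃ i, B i) = ENNReal.ofReal (∑ i, r ^ (Λ - l i) * (1 - r ^ (l i))) := by
    rw [measure_iUnion hBdisj hBmeas, tsum_fintype,
      Finset.sum_congr rfl (fun i _ => hBval i),
      ← ENNReal.ofReal_sum_of_nonneg (fun i _ => mul_nonneg (Real.rpow_nonneg hr0.le _)
        (sub_nonneg.mpr (Real.rpow_le_one hr0.le hr1.le (hl i).le)))]
  -- the integral of the second-max part
  have hint3 : ∫ ω, h (S ω) ∂μ
      = ∫ t in r..1, Vq t * ((1 - (N:ℝ)) * Λ * t ^ (Λ - 1)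
          + ∑ i, (Λ - l i) * t ^ (Λ - l i - 1)) := by
    have herase_ne : ∀ i : Fin N, (Finset.univ.erase i : Finset (Fin N)).Nonempty := by
      intro i
      rw [← Finset.card_pos, Finset.card_erase_of_mem (Finset.mem_univ i)]
      simp only [Finset.card_univ, Fintype.card_fin]
      omega
    -- algebraic identity for G
    have hGalg : ∀ s : ℝ, 0 ≤ s → G s = s ^ Λ + ∑ i, (1 - s ^ l i) * s ^ (Λ - l i) := by
      intro s hs
      have hterm : ∀ i : Fin N, (1 - s ^ l i) * s ^ (Λ - l i) = s ^ (Λ - l i) - s ^ Λ := by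
        intro i
        have hsum : l i + (Λ - l i) = Λ := by ring
        have hmul : s ^ (l i) * s ^ (Λ - l i) = s ^ Λ := by
          rw [← Real.rpow_add' hs (by rw [hsum]; exact hΛpos.ne'), hsum]
        calc (1 - s ^ l i) * s ^ (Λ - l i)
            = s ^ (Λ - l i) - s ^ (l i) * s ^ (Λ - l i) := by ring
          _ = s ^ (Λ - l i) - s ^ Λ := by rw [hmul]
      rw [Finset.sum_congr rfl (fun i _ => hterm i), Finset.sum_sub_distrib,
        Finset.sum_const, Finset.card_univ, Fintype.card_fin, nsmul_eq_mul]
      simp only [hG_def]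
      ring
    have hGnn : ∀ s ∈ Set.Icc (0:ℝ) 1, 0 ≤ G s := by
      intro s hs
      rw [hGalg s hs.1]
      have hterms : ∀ i : Fin N, (0:ℝ) ≤ (1 - s ^ l i) * s ^ (Λ - l i) := fun i =>
        mul_nonneg (sub_nonneg.mpr (Real.rpow_le_one hs.1 hs.2 (hl i).le))
          (Real.rpow_nonneg hs.1 _)
      exact add_nonneg (Real.rpow_nonneg hs.1 _) (Finset.sum_nonneg (fun i _ => hterms i))
    -- nonnegativity of the density
    have hgnn : ∀ x ∈ Set.Ioc (0:ℝ) 1, 0 ≤ g x := by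
      intro x hx
      have hkey : ((N:ℝ) - 1) * Λ = ∑ i : Fin N, (Λ - l i) := by
        rw [Finset.sum_sub_distrib, ← hΛ, Finset.sum_const, Finset.card_univ,
          Fintype.card_fin, nsmul_eq_mul]
        ring
      simp only [hg_def]
      rw [hkey, Finset.sum_mul, ← Finset.sum_sub_distrib]
      refine Finset.sum_nonneg (fun i _ => ?_)
      have h1 : x ^ (Λ - 1) ≤ x ^ (Λ - l i - 1) :=
        Real.rpow_le_rpow_of_exponent_ge hx.1 hx.2 (by linarith [hl i])
      nlinarith [(hΛl i).le, h1]
    -- the CDF of S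
    have hCDF : ∀ t : ℝ, μ {ω | S ω ≤ t} = ENNReal.ofReal (G (cl t)) := by
      intro t
      have hsmem : cl t ∈ Set.Icc (0:ℝ) 1 := hcl_mem t
      have hprod_pow : ∀ sfin : Finset (Fin N), sfin.Nonempty →
          (∏ j ∈ sfin, ENNReal.ofReal (cl t ^ l j))
            = ENNReal.ofReal (cl t ^ (∑ j ∈ sfin, l j)) := by
        intro sfin hsfin
        rcases eq_or_lt_of_le hsmem.1 with h0 | h0
        · obtain ⟨j0, hj0⟩ := hsfin
          rw [← h0, Finset.prod_eq_zero hj0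
            (by rw [Real.zero_rpow (hl j0).ne', ENNReal.ofReal_zero]),
            Real.zero_rpow (Finset.sum_pos (fun j _ => hl j) ⟨j0, hj0⟩).ne',
            ENNReal.ofReal_zero]
        · rw [← ENNReal.ofReal_prod_of_nonneg (fun j _ => Real.rpow_nonneg hsmem.1 _),
            ← Real.rpow_sum_of_pos h0]
      set A' : Set Ω := ⋂ j ∈ Finset.univ, W j ⁻¹' Set.Iic t with hA'_def
      set D : Fin N → Set Ω := fun i =>
        ⋂ j ∈ Finset.univ, W j ⁻¹' (if j = i then Set.Ioi t else Set.Iic t) with hD_def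
      have hA'meas : MeasurableSet A' :=
        MeasurableSet.biInter (Set.to_countable _) (fun j _ => (hWm j) measurableSet_Iic)
      have hDmeas : ∀ i, MeasurableSet (D i) := by
        intro i
        refine MeasurableSet.biInter (Set.to_countable _) (fun j _ => (hWm j) ?_)
        split
        · exact measurableSet_Ioi
        · exact measurableSet_Iic
      have hmemA' : ∀ ω, ω ∈ A' ↔ ∀ j, W j ω ≤ t := by intro ω; simp [hA'_def]
      have hmemD : ∀ ω i, ω ∈ D i ↔ (t < W i ω ∧ ∀ j, j ≠ i → W j ω ≤ t) := by
        intro ω i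
        simp only [hD_def, Set.mem_iInter, Set.mem_preimage]
        constructor
        · intro hj
          have h1 := hj i (Finset.mem_univ i)
          rw [if_pos rfl] at h1
          refine ⟨h1, fun j hji => ?_⟩
          have h2 := hj j (Finset.mem_univ j)
          rwa [if_neg hji] at h2
        · rintro ⟨h1, h2⟩ j _
          by_cases hji : j = i
          · subst hji; rwa [if_pos rfl]
          · rw [if_neg hji]; exact h2 j hji
      have hset : {ω | S ω ≤ t} = A' ∪ ⋃ i, D i := by
        ext ω
        simp only [Set.mem_setOf_eq, Set.mem_union, Set.mem_iUnion]
        constructor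
        · intro hSt
          obtain ⟨i, hi⟩ := (sup'_offDiag_le_iff hN (fun i => W i ω) t).mp hSt
          by_cases hWi : W i ω ≤ t
          · refine Or.inl ((hmemA' ω).mpr (fun j => ?_))
            by_cases hji : j = i
            · subst hji; exact hWi
            · exact hi j hji
          · exact Or.inr ⟨i, (hmemD ω i).mpr ⟨not_le.mp hWi, hi⟩⟩
        · rintro (hA | ⟨i, hi⟩)
          · exact (sup'_offDiag_le_iff hN (fun i => W i ω) t).mpr
              ⟨⟨0, hNpos⟩, fun j _ => ((hmemA' ω).mp hA) j⟩
          · exact (sup'_offDiag_le_iff hN (fun i => W i ω) t).mpr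
              ⟨i, ((hmemD ω i).mp hi).2⟩
      have hdisj1 : Disjoint A' (⋃ i, D i) := by
        rw [Set.disjoint_left]
        intro ω hω1 hω2
        obtain ⟨i, hi⟩ := Set.mem_iUnion.mp hω2
        exact absurd (((hmemA' ω).mp hω1) i) (not_le.mpr ((hmemD ω i).mp hi).1)
      have hDdisj : Pairwise (Function.onFun Disjoint D) := by
        intro i j hij
        rw [Function.onFun, Set.disjoint_left]
        intro ω h1 h2
        exact absurd ((hmemD ω i).mp h1).1 (not_lt.mpr (((hmemD ω j).mp h2).2 i hij))
      have hone : ∀ j : Fin N, μ (W j ⁻¹' Set.Iic t) = ENNReal.ofReal (cl t ^ l j) := fun j =>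
        meas_rpow_le_cl μ (U j) (hU j) (hunif j) (hl j) t
      have hA'val : μ A' = ENNReal.ofReal (cl t ^ Λ) := by
        have hprod := hWindep.measure_inter_preimage_eq_mul Finset.univ
          (sets := fun _ => Set.Iic t) (fun i _ => measurableSet_Iic)
        rw [hA'_def, hprod, Finset.prod_congr rfl (fun j _ => hone j),
          hprod_pow Finset.univ hne, ← hΛ]
      have hDval : ∀ i, μ (D i) = ENNReal.ofReal ((1 - cl t ^ l i) * cl t ^ (Λ - l i)) := by
        intro i
        have hsets : ∀ j : Fin N, MeasurableSet (if j = i then Set.Ioi t else Set.Iic t) := by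
          intro j; split
          · exact measurableSet_Ioi
          · exact measurableSet_Iic
        have hprod := hWindep.measure_inter_preimage_eq_mul Finset.univ
          (sets := fun j => if j = i then Set.Ioi t else Set.Iic t) (fun j _ => hsets j)
        have hDi : D i = ⋂ j ∈ Finset.univ, W j ⁻¹' (if j = i then Set.Ioi t else Set.Iic t) := by
          rw [hD_def]
        have hgei : μ (W i ⁻¹' Set.Ioi t) = ENNReal.ofReal (1 - cl t ^ l i) := by
          have hc : W i ⁻¹' Set.Ioi t = (W i ⁻¹' Set.Iic t)ᶜ := by
            rw [← Set.preimage_compl, Set.compl_Iic]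
          rw [hc, measure_compl ((hWm i) measurableSet_Iic) (measure_ne_top μ _), hone i,
            measure_univ, ← ENNReal.ofReal_one,
            ← ENNReal.ofReal_sub _ (Real.rpow_nonneg hsmem.1 _)]
        rw [hDi, hprod, ← Finset.prod_erase_mul _ _ (Finset.mem_univ i)]
        have herase : ∀ j ∈ Finset.univ.erase i,
            μ (W j ⁻¹' (if j = i then Set.Ioi t else Set.Iic t))
              = ENNReal.ofReal (cl t ^ l j) := by
          intro j hj
          rw [if_neg (Finset.ne_of_mem_erase hj), hone j]
        have hii : μ (W i ⁻¹' (fun j => if j = i then Set.Ioi t else Set.Iic t) i)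
            = ENNReal.ofReal (1 - cl t ^ l i) := by
          simpa using hgei
        rw [Finset.prod_congr rfl herase, hii, hprod_pow _ (herase_ne i), hsum_erase i,
          ← ENNReal.ofReal_mul (Real.rpow_nonneg hsmem.1 _)]
        rw [mul_comm]
      rw [hset, measure_union hdisj1 (MeasurableSet.iUnion hDmeas),
        measure_iUnion hDdisj hDmeas, tsum_fintype,
        Finset.sum_congr rfl (fun i _ => hDval i), hA'val,
        ← ENNReal.ofReal_sum_of_nonneg (fun i _ => mul_nonneg
          (sub_nonneg.mpr (Real.rpow_le_one hsmem.1 hsmem.2 (hl i).le))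
          (Real.rpow_nonneg hsmem.1 _)),
        ← ENNReal.ofReal_add (Real.rpow_nonneg hsmem.1 _)
          (Finset.sum_nonneg (fun i _ => mul_nonneg
            (sub_nonneg.mpr (Real.rpow_le_one hsmem.1 hsmem.2 (hl i).le))
            (Real.rpow_nonneg hsmem.1 _))),
        hGalg (cl t) hsmem.1]
    -- the law of S
    set ν : Measure ℝ := Measure.map S μ with hν_def
    haveI hν_prob : IsProbabilityMeasure ν := Measure.isProbabilityMeasure_map hSm.aemeasurable
    have hνIic : ∀ t, ν (Set.Iic t) = ENNReal.ofReal (G (cl t)) := by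
      intro t
      rw [hν_def, Measure.map_apply hSm measurableSet_Iic]
      exact hCDF t
    -- derivative and continuity of G
    have hGderiv : ∀ x ∈ Set.Ioo (0:ℝ) 1, HasDerivAt G (g x) x := by
      intro x hx
      have hsum : HasDerivAt (fun s : ℝ => ∑ i, s ^ (Λ - l i))
          (∑ i, (Λ - l i) * x ^ (Λ - l i - 1)) x :=
        HasDerivAt.fun_sum (fun i _ => Real.hasDerivAt_rpow_const (Or.inl hx.1.ne'))
      have hpow : HasDerivAt (fun s : ℝ => ((N:ℝ) - 1) * s ^ Λ)
          (((N:ℝ) - 1) * (Λ * x ^ (Λ - 1))) x :=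
        (Real.hasDerivAt_rpow_const (Or.inl hx.1.ne')).const_mul _
      have htot := hsum.fun_sub hpow
      simp only [hg_def, hG_def]
      refine htot.congr_deriv ?_
      ring
    have hGcont : ContinuousOn G (Set.Icc 0 1) := by
      have hrc : ∀ c : ℝ, 0 < c → ContinuousOn (fun s : ℝ => s ^ c) (Set.Icc 0 1) :=
        fun c hc x _ => (Real.continuousAt_rpow_const x c (Or.inr hc.le)).continuousWithinAt
      simp only [hG_def]
      exact (continuousOn_finset_sum _ (fun i _ => hrc _ (hΛl i))).sub
        (continuousOn_const.mul (hrc _ hΛpos))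
    have hgint : ∀ a b : ℝ, IntervalIntegrable g volume a b := by
      intro a b
      have h1 : ∀ i : Fin N,
          IntervalIntegrable (fun t : ℝ => (Λ - l i) * t ^ (Λ - l i - 1)) volume a b :=
        fun i => (intervalIntegral.intervalIntegrable_rpow' (by linarith [hΛl i])).const_mul _
      have h2 : IntervalIntegrable (fun t : ℝ => ((N:ℝ) - 1) * Λ * t ^ (Λ - 1)) volume a b :=
        (intervalIntegral.intervalIntegrable_rpow' (by linarith)).const_mul _
      have h3 : IntervalIntegrable
          (fun t : ℝ => ∑ i, (Λ - l i) * t ^ (Λ - l i - 1)) volume a b := by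
        have h4 := IntervalIntegrable.sum Finset.univ (fun i _ => h1 i)
        have h5 : (∑ i : Fin N, fun t : ℝ => (Λ - l i) * t ^ (Λ - l i - 1))
            = fun t : ℝ => ∑ i, (Λ - l i) * t ^ (Λ - l i - 1) := by
          funext t
          simp [Finset.sum_apply]
        rwa [h5] at h4
      simp only [hg_def]
      exact h3.sub h2
    have hFTC : ∀ a b : ℝ, 0 ≤ a → a ≤ b → b ≤ 1 → (∫ x in a..b, g x) = G b - G a := by
      intro a b ha hab hb1
      refine intervalIntegral.integral_eq_sub_of_hasDeriv_right_of_le hab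
        (hGcont.mono (Set.Icc_subset_Icc ha hb1))
        (fun x hx => (hGderiv x ⟨lt_of_le_of_lt ha hx.1, lt_of_lt_of_le hx.2 hb1⟩).hasDerivWithinAt)
        (hgint a b)
    -- the density measure
    have hgm : Measurable g := by simp only [hg_def]; fun_prop
    set dens : ℝ → NNReal := fun t => ((Set.Ioc (0:ℝ) 1).indicator g t).toNNReal with hdens_def
    have hdens_meas : Measurable dens := (hgm.indicator measurableSet_Ioc).real_toNNReal
    set ρ : Measure ℝ := volume.withDensity (fun t => (dens t : ENNReal)) with hρ_def
    have hνρ : ν = ρ := by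
      refine MeasureTheory.Measure.ext_of_Ioc ν ρ (fun a b hab => ?_)
      have hν_ab : ν (Set.Ioc a b) = ENNReal.ofReal (G (cl b) - G (cl a)) := by
        rw [← Set.Iic_sdiff_Iic, measure_diff (Set.Iic_subset_Iic.mpr hab.le)
          nullMeasurableSet_Iic (measure_ne_top ν _), hνIic, hνIic,
          ENNReal.ofReal_sub _ (hGnn _ (hcl_mem a))]
      have hind : (fun t => (dens t : ENNReal))
          = Set.indicator (Set.Ioc (0:ℝ) 1) (fun t => ENNReal.ofReal (g t)) := by
        funext t
        simp only [hdens_def]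
        by_cases ht : t ∈ Set.Ioc (0:ℝ) 1
        · rw [Set.indicator_of_mem ht, Set.indicator_of_mem ht]; rfl
        · rw [Set.indicator_of_notMem ht, Set.indicator_of_notMem ht]; simp
      have hρ_ab : ρ (Set.Ioc a b)
          = ∫⁻ x in Set.Ioc (a ⊔ 0) (b ⊓ 1), ENNReal.ofReal (g x) ∂volume := by
        rw [hρ_def, withDensity_apply _ measurableSet_Ioc, hind,
          lintegral_indicator measurableSet_Ioc,
          Measure.restrict_restrict measurableSet_Ioc, Set.inter_comm, Set.Ioc_inter_Ioc]
      rw [hν_ab, hρ_ab]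
      rcases lt_or_ge (a ⊔ 0) (b ⊓ 1) with hcase | hcase
      · have ha0 : (0:ℝ) ≤ a ⊔ 0 := le_sup_right
        have hb1 : b ⊓ 1 ≤ 1 := inf_le_right
        have hInt : IntegrableOn g (Set.Ioc (a ⊔ 0) (b ⊓ 1)) volume := by
          have hgi := hgint (a ⊔ 0) (b ⊓ 1)
          rwa [intervalIntegrable_iff_integrableOn_Ioc_of_le hcase.le] at hgi
        have hnn : 0 ≤ᵐ[volume.restrict (Set.Ioc (a ⊔ 0) (b ⊓ 1))] g := by
          refine (ae_restrict_iff' measurableSet_Ioc).mpr (Filter.Eventually.of_forall ?_)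
          intro x hx
          exact hgnn x ⟨lt_of_le_of_lt ha0 hx.1, hx.2.trans hb1⟩
        rw [← ofReal_integral_eq_lintegral_ofReal hInt hnn,
          ← intervalIntegral.integral_of_le hcase.le, hFTC _ _ ha0 hcase.le hb1]
        have hclb : cl b = b ⊓ 1 := by
          simp only [hcl_def]
          rw [inf_comm, max_eq_right (le_trans ha0 hcase.le)]
        have hcla : cl a = a ⊔ 0 := by
          have ha1 : a ≤ 1 := le_trans le_sup_left (le_trans hcase.le hb1)
          simp only [hcl_def]
          rw [min_eq_right ha1, max_comm]
        rw [hclb, hcla]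
      · have hclab : cl a = cl b := by
          rcases le_sup_iff.mp hcase with hba | hb0
          · rcases le_total b 1 with hb | hb
            · rw [inf_eq_left.mpr hb] at hba; linarith
            · rw [inf_eq_right.mpr hb] at hba
              simp only [hcl_def]
              rw [min_eq_left hba, min_eq_left (le_trans hba hab.le)]
          · rcases le_total b 1 with hb | hb
            · rw [inf_eq_left.mpr hb] at hb0
              have hA0 : a ≤ 0 := le_trans hab.le hb0
              simp only [hcl_def]
              rw [min_eq_right (le_trans hA0 zero_le_one),
                min_eq_right (le_trans hb0 zero_le_one),
                max_eq_left hA0, max_eq_left hb0]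
            · rw [inf_eq_right.mpr hb] at hb0; linarith
        rw [Set.Ioc_eq_empty (not_lt.mpr hcase), hclab, sub_self, ENNReal.ofReal_zero,
          Measure.restrict_empty, lintegral_zero_measure]
    -- final computation
    have hmap : ∫ ω, h (S ω) ∂μ = ∫ t, h t ∂ν :=
      (integral_map hSm.aemeasurable hhm.aestronglyMeasurable).symm
    rw [hmap, hνρ, hρ_def, integral_withDensity_eq_integral_smul hdens_meas h]
    have hindnn : ∀ t, 0 ≤ (Set.Ioc (0:ℝ) 1).indicator g t :=
      fun t => Set.indicator_nonneg (fun x hx => hgnn x hx) t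
    have hae : (fun t => dens t • h t)
        =ᵐ[volume] (Set.Ioc r 1).indicator (fun t => g t * Vq t) := by
      have hner : ∀ᵐ t ∂(volume : Measure ℝ), t ≠ r := by
        rw [ae_iff]
        simp only [ne_eq, not_not, Set.setOf_eq_eq_singleton]
        exact measure_singleton r
      filter_upwards [hner] with t htr
      have hsmul : dens t • h t = (Set.Ioc (0:ℝ) 1).indicator g t * h t := by
        have h1 : ((dens t : NNReal) : ℝ) = (Set.Ioc (0:ℝ) 1).indicator g t :=
          Real.coe_toNNReal _ (hindnn t)
        rw [NNReal.smul_def, h1, smul_eq_mul]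
      rw [hsmul]
      by_cases ht : t ∈ Set.Ioc r 1
      · have ht01 : t ∈ Set.Ioc (0:ℝ) 1 := ⟨lt_trans hr0 ht.1, ht.2⟩
        rw [Set.indicator_of_mem ht, Set.indicator_of_mem ht01]
        simp only [hh_def]
        rw [if_neg (not_lt.mpr (le_of_lt ht.1)),
          hVt_eq t ⟨le_of_lt (lt_trans hr0 ht.1), ht.2⟩]
      · rw [Set.indicator_of_notMem ht]
        by_cases hlt : t < r
        · simp only [hh_def]
          rw [if_pos hlt, mul_zero]
        · have hrt : r < t := lt_of_le_of_ne (not_lt.mp hlt) (Ne.symm htr)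
          have ht1 : ¬ t ≤ 1 := fun hc => ht ⟨hrt, hc⟩
          rw [Set.indicator_of_notMem (fun hc => ht1 hc.2), zero_mul]
    rw [integral_congr_ae hae, integral_indicator measurableSet_Ioc,
      ← intervalIntegral.integral_of_le hr1.le]
    refine intervalIntegral.integral_congr (fun t _ => ?_)
    simp only [hg_def]
    ring
  -- integrability
  have hi1 : Integrable (A.indicator (fun _ => V0)) μ :=
    (integrable_const V0).indicator hAmeas
  have hi2 : Integrable ((⋃ i, B i).indicator (fun _ => Vq r)) μ :=
    (integrable_const (Vq r)).indicator (MeasurableSet.iUnion (fun i => hBmeas i))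
  have hi3 : Integrable (fun ω => h (S ω)) μ := by
    obtain ⟨C, hC⟩ := (isCompact_Icc (a := (0:ℝ)) (b := 1)).exists_bound_of_continuousOn hVcont
    refine Integrable.mono' (integrable_const (max C 0)) (hhm.comp hSm).aestronglyMeasurable ?_
    refine Filter.Eventually.of_forall (fun ω => ?_)
    simp only [hh_def]
    split
    · simp
    · exact le_trans (hC _ (hcl_mem _)) (le_max_left _ _)
  have hsplit : ∫ ω, (A.indicator (fun _ => V0) ω + (⋃ i, B i).indicator (fun _ => Vq r) ω
        + h (S ω)) ∂μ
      = (∫ ω, A.indicator (fun _ => V0) ω ∂μ)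
        + (∫ ω, (⋃ i, B i).indicator (fun _ => Vq r) ω ∂μ) + ∫ ω, h (S ω) ∂μ := by
    rw [integral_add
      (f := fun ω => A.indicator (fun _ => V0) ω + (⋃ i, B i).indicator (fun _ => Vq r) ω)
      (g := fun ω => h (S ω)) (hi1.add hi2) hi3, integral_add hi1 hi2]
  rw [integral_congr_ae hptwise, hsplit,
    integral_indicator_const _ hAmeas, integral_indicator_const _ (MeasurableSet.iUnion hBmeas),
    measureReal_def, measureReal_def, hμA, hμB, hint3]
  rw [ENNReal.toReal_ofReal (by positivity), ENNReal.toReal_ofReal ?nn]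
  case nn =>
    refine Finset.sum_nonneg (fun i _ => ?_)
    have h1 : r ^ (l i) ≤ 1 := Real.rpow_le_one hr0.le hr1.le (hl i).le
    have h2 : (0:ℝ) ≤ r ^ (Λ - l i) := Real.rpow_nonneg hr0.le _
    nlinarith
  rw [smul_eq_mul, smul_eq_mul, mul_comm, mul_comm (∑ i, r ^ (Λ - l i) * (1 - r ^ (l i)))]
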